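/- Let A be a complex number. Then the equation A = (1-ξ)/(1-η) has at most one solution (ξ, η) ∈ ℂ² satisfying ξ ≠ η, |ξ| = |η| = 1, ξ ≠ 1, and η ≠ 1. -/

import Mathlib

/-- For a complex number `A`, the equation `A = (1-ξ)/(1-η)` has at most one
solution `(ξ, η)` with `ξ ≠ η`, `|ξ| = |η| = 1`, `ξ ≠ 1`, `η ≠ 1`. -/
theorem at_most_one_solution (A : ℂ) (ξ η ξ₁ η₁ : ℂ)
    (hξη : ξ ≠ η) (hξ : ‖ξ‖ = 1) (hη : ‖η‖ = 1)
    (hξ1 : ξ ≠ 1) (hη1 : η ≠ 1)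
    (hξη' : ξ₁ ≠ η₁) (hξ' : ‖ξ₁‖ = 1) (hη' : ‖η₁‖ = 1)
    (hξ1' : ξ₁ ≠ 1) (hη1' : η₁ ≠ 1)
    (h : A = (1 - ξ) / (1 - η)) (h' : A = (1 - ξ₁) / (1 - η₁)) :
    ξ = ξ₁ ∧ η = η₁ := by
  set B := (starRingEnd ℂ) A with hB
  have hη0 : (1:ℂ) - η ≠ 0 := sub_ne_zero.mpr (Ne.symm hη1)
  have hη0' : (1:ℂ) - η₁ ≠ 0 := sub_ne_zero.mpr (Ne.symm hη1')
  have hξ0 : (1:ℂ) - ξ ≠ 0 := sub_ne_zero.mpr (Ne.symm hξ1)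
  have hξ0' : (1:ℂ) - ξ₁ ≠ 0 := sub_ne_zero.mpr (Ne.symm hξ1')
  have e1 : A * (1 - η) = 1 - ξ := by rw [h, div_mul_cancel₀ _ hη0]
  have e2 : A * (1 - η₁) = 1 - ξ₁ := by rw [h', div_mul_cancel₀ _ hη0']
  have hA0 : A ≠ 0 := by
    intro hA; rw [hA, zero_mul] at e1; exact hξ0 e1.symm
  -- conj z * z = 1 for unit-circle points
  have cξ : (starRingEnd ℂ) ξ * ξ = 1 := by
    rw [mul_comm, Complex.mul_conj, Complex.normSq_eq_norm_sq, hξ]; norm_num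
  have cη : (starRingEnd ℂ) η * η = 1 := by
    rw [mul_comm, Complex.mul_conj, Complex.normSq_eq_norm_sq, hη]; norm_num
  have cξ' : (starRingEnd ℂ) ξ₁ * ξ₁ = 1 := by
    rw [mul_comm, Complex.mul_conj, Complex.normSq_eq_norm_sq, hξ']; norm_num
  have cη' : (starRingEnd ℂ) η₁ * η₁ = 1 := by
    rw [mul_comm, Complex.mul_conj, Complex.normSq_eq_norm_sq, hη']; norm_num
  have ce1 : B * (1 - (starRingEnd ℂ) η) = 1 - (starRingEnd ℂ) ξ := by
    have := congrArg (starRingEnd ℂ) e1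
    simpa using this
  have ce2 : B * (1 - (starRingEnd ℂ) η₁) = 1 - (starRingEnd ℂ) ξ₁ := by
    have := congrArg (starRingEnd ℂ) e2
    simpa using this
  have key : B * ξ = η * A := by
    have k1 : B * ξ * (1 - η) = η * (1 - ξ) := by
      linear_combination (-(ξ*η)) * ce1 - (ξ*B) * cη + η * cξ
    have k2 : B * ξ * (1 - η) = η * A * (1 - η) := by
      rw [k1, ← e1]; ring
    exact mul_right_cancel₀ hη0 k2
  have key' : B * ξ₁ = η₁ * A := by
    have k1 : B * ξ₁ * (1 - η₁) = η₁ * (1 - ξ₁) := by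
      linear_combination (-(ξ₁*η₁)) * ce2 - (ξ₁*B) * cη' + η₁ * cξ'
    have k2 : B * ξ₁ * (1 - η₁) = η₁ * A * (1 - η₁) := by
      rw [k1, ← e2]; ring
    exact mul_right_cancel₀ hη0' k2
  have hB1 : B ≠ 1 := by
    intro hB1
    have hA1 : A = 1 := by
      have := congrArg (starRingEnd ℂ) hB1
      simpa [hB] using this
    rw [hA1, one_mul] at e1
    exact hξη (by linear_combination e1)
  have hB0 : (1:ℂ) - B ≠ 0 := sub_ne_zero.mpr (Ne.symm hB1)
  -- ξ(1-B) = 1-A from e1 and key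
  have f1 : ξ * (1 - B) = 1 - A := by
    have : A * η = B * ξ := by rw [key]; ring
    linear_combination e1 + this
  have f2 : ξ₁ * (1 - B) = 1 - A := by
    have : A * η₁ = B * ξ₁ := by rw [key']; ring
    linear_combination e2 + this
  have hξξ : ξ = ξ₁ := mul_right_cancel₀ hB0 (f1.trans f2.symm)
  refine ⟨hξξ, ?_⟩
  have : η * A = η₁ * A := by rw [← key, ← key', hξξ]
  exact mul_right_cancel₀ hA0 this
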